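/- Under the hypotheses of the previous setting (finite tree T with vertex set W, |W| ≥ 2, edges E; q ≥ 1; column-stochastic symmetric edge matrices Q with all |Q_{(x,y)}(i,j)|_p ≤ |q|_p; nonempty set of leaves ∂Λ with boundary values |z_i(x) − 1|_p ≤ 1/p; Z = Σ_{φ : W → {1,…,q}} (∏_{x ∈ ∂Λ} z_{φ(x)}(x))(∏_{{x,y} ∈ E} Q_{(x,y)}(φ(x),φ(y)))), for every configuration ς : W → {1,…,q} the normalized weight satisfies |(∏_{x ∈ ∂Λ} z_{ς(x)}(x)) · (∏_{{x,y} ∈ E} Q_{(x,y)}(ς(x),ς(y))) / Z|_p ≤ 1. -/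

import Mathlib

open SimpleGraph Finset

universe u

lemma leaf_not_mem_path_support {V : Type*} {G : SimpleGraph V} [Fintype V] [DecidableEq V]
    [DecidableRel G.Adj] {x y : V} (hnb : G.neighborFinset x = {y}) {a b : V}
    (p : G.Walk a b) (hp : p.IsPath) (ha : a ≠ x) (hb : b ≠ x) : x ∉ p.support := by
  intro hx
  have huniq : ∀ c, G.Adj x c → c = y := fun c hc => by
    have : c ∈ G.neighborFinset x := (SimpleGraph.mem_neighborFinset G x c).mpr hc
    simpa [hnb] using this
  have hspec := p.take_spec hx
  have hnd : ((p.takeUntil x hx).support ++ (p.dropUntil x hx).support.tail).Nodup := by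
    have h2 := hp.support_nodup
    rw [← hspec, SimpleGraph.Walk.support_append] at h2
    exact h2
  have hy1 : y ∈ (p.takeUntil x hx).support := by
    have hnn : ¬ (p.takeUntil x hx).reverse.Nil := by
      intro hn
      exact ha (SimpleGraph.Walk.Nil.eq hn).symm
    obtain ⟨c, hadj, q, hq⟩ := SimpleGraph.Walk.not_nil_iff.mp hnn
    have hc : c = y := huniq c hadj
    have : y ∈ (p.takeUntil x hx).reverse.support := by
      rw [hq, SimpleGraph.Walk.support_cons, ← hc]
      exact List.mem_cons_of_mem _ q.start_mem_support
    rwa [SimpleGraph.Walk.support_reverse, List.mem_reverse] at this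
  have hy2 : y ∈ (p.dropUntil x hx).support.tail := by
    have hnn : ¬ (p.dropUntil x hx).Nil := by
      intro hn
      exact hb (SimpleGraph.Walk.Nil.eq hn).symm
    obtain ⟨c, hadj, q, hq⟩ := SimpleGraph.Walk.not_nil_iff.mp hnn
    have hc : c = y := huniq c hadj
    rw [hq, SimpleGraph.Walk.support_cons, List.tail_cons, ← hc]
    exact q.start_mem_support
  exact (List.nodup_append'.mp hnd).2.2 hy1 hy2

lemma reachable_induce_of_support {V : Type*} {G : SimpleGraph V} {s : Set V} :
    ∀ {a b : V} (p : G.Walk a b), (∀ c ∈ p.support, c ∈ s) →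
      ∀ (ha : a ∈ s) (hb : b ∈ s), (G.induce s).Reachable ⟨a, ha⟩ ⟨b, hb⟩ := by
  intro a b p
  induction p with
  | nil => intro _ ha hb; rfl
  | @cons u v w h q ih =>
      intro hsupp ha hb
      have hv : v ∈ s := hsupp v (by simp [SimpleGraph.Walk.support_cons,
        q.start_mem_support])
      have hadj : (G.induce s).Adj ⟨u, ha⟩ ⟨v, hv⟩ := by
        simpa using h
      exact hadj.reachable.trans (ih (fun c hc => hsupp c (by
        simp [SimpleGraph.Walk.support_cons, hc])) hv hb)

lemma exists_leaf {V : Type*} [Fintype V] [DecidableEq V] (G : SimpleGraph V)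
    [DecidableRel G.Adj] (hT : G.IsTree) (hcard : 2 ≤ Fintype.card V) :
    ∃ x : V, G.degree x = 1 := by
  by_contra h
  push_neg at h
  have hdeg : ∀ v : V, 2 ≤ G.degree v := by
    intro v
    obtain ⟨w, hw⟩ := Fintype.exists_ne_of_one_lt_card (by omega) v
    obtain ⟨q⟩ := hT.isConnected v w
    have hpos : 0 < G.degree v := by
      rw [G.degree_pos_iff_exists_adj]
      cases q with
      | nil => exact absurd rfl hw.symm
      | cons hadj q' => exact ⟨_, hadj⟩
    have := h v
    omega
  have hsum := G.sum_degrees_eq_twice_card_edges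
  have hEcard := hT.card_edgeFinset
  have : 2 * Fintype.card V ≤ ∑ v : V, G.degree v := by
    calc 2 * Fintype.card V = ∑ _v : V, 2 := by simp [mul_comm]
      _ ≤ ∑ v : V, G.degree v := Finset.sum_le_sum (fun v _ => hdeg v)
  omega

lemma tree_sum {p : ℕ} [hp : Fact p.Prime] (q : ℕ) :
    ∀ (n : ℕ) {V : Type u} [Fintype V] [DecidableEq V]
      (G : SimpleGraph V) [DecidableRel G.Adj], Fintype.card V = n → G.IsTree →
      ∀ (f : V → V → Fin q → Fin q → ℚ_[p])
        (hsym : ∀ x y i j, f x y i j = f y x j i)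
        (hstoch : ∀ x y, G.Adj x y → ∀ i, ∑ j, f x y j i = 1),
      ∑ φ : V → Fin q, ∏ e ∈ G.edgeFinset,
          Sym2.lift ⟨fun a b => f a b (φ a) (φ b), fun a b => hsym a b _ _⟩ e
        = (q : ℚ_[p]) := by
  intro n
  induction n using Nat.strong_induction_on with
  | _ n ih =>
    intro V _ _ G _ hcard hT f hsym hstoch
    have hne : Nonempty V := hT.isConnected.nonempty
    rcases Nat.lt_or_ge n 2 with h2 | h2
    · -- base case: one vertex, no edges
      have hpos : 0 < Fintype.card V := Fintype.card_pos
      have hn1 : Fintype.card V = 1 := by omega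
      have hEc := hT.card_edgeFinset
      have hE : G.edgeFinset = ∅ := by
        apply Finset.card_eq_zero.mp
        omega
      rw [hE]
      simp only [Finset.prod_empty, Finset.sum_const, Finset.card_univ, nsmul_eq_mul, mul_one]
      rw [Fintype.card_fun, hn1, pow_one, Fintype.card_fin]
    · -- inductive step: delete a leaf x with neighbor y
      obtain ⟨x, hx⟩ := exists_leaf G hT (by omega)
      obtain ⟨y, hnb⟩ := Finset.card_eq_one.mp hx
      have hadj : G.Adj x y := by
        have : y ∈ G.neighborFinset x := by simp [hnb]
        simpa using this
      have hyx : y ≠ x := hadj.symm.ne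
      haveI : DecidablePred (· ∈ ({x}ᶜ : Set V)) :=
        fun v => inferInstanceAs (Decidable ¬ v = x)
      haveI hdec' : DecidableRel (G.induce ({x}ᶜ : Set V)).Adj :=
        fun a b => inferInstanceAs (Decidable (G.Adj a b))
      set G' := G.induce ({x}ᶜ : Set V) with hG'
      -- G' is a tree
      haveI : Nonempty ({x}ᶜ : Set V) := ⟨⟨y, by simp [hyx]⟩⟩
      have hT' : G'.IsTree := by
        constructor
        · refine ⟨?_⟩
          rintro ⟨a, ha⟩ ⟨b, hb⟩
          obtain ⟨w⟩ := hT.isConnected a b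
          have hxs : x ∉ (w.toPath : G.Walk a b).support :=
            leaf_not_mem_path_support hnb _ w.toPath.2 (by simpa using ha) (by simpa using hb)
          exact reachable_induce_of_support _ (fun c hc => by
            simp only [Set.mem_compl_iff, Set.mem_singleton_iff]
            rintro rfl
            exact hxs hc) ha hb
        · intro v c hc
          have hinj : Function.Injective
              ((SimpleGraph.Embedding.induce (G := G) ({x}ᶜ : Set V)).toHom : _ → V) :=
            Subtype.val_injective
          exact hT.IsAcyclic _ ((SimpleGraph.Walk.map_isCycle_iff_of_injective hinj).mpr hc)
      have hcard' : Fintype.card ({x}ᶜ : Set V) = n - 1 := by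
        rw [Fintype.card_compl_set, Set.card_singleton, hcard]
      -- incidence edges at x
      have hinc : G.incidenceFinset x = {s(x, y)} := by
        have hcard1 : (G.incidenceFinset x).card = 1 := by
          rw [G.card_incidenceFinset_eq_degree]; exact hx
        obtain ⟨e, he⟩ := Finset.card_eq_one.mp hcard1
        have hmem : s(x, y) ∈ G.incidenceFinset x := by
          rw [SimpleGraph.mem_incidenceFinset]
          exact ⟨hadj, by simp⟩
        rw [he] at hmem ⊢
        simp only [Finset.mem_singleton] at hmem
        rw [hmem]
      have hfilter : {e ∈ G.edgeFinset | x ∈ e} = {s(x, y)} := by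
        rw [← SimpleGraph.incidenceFinset_eq_filter]; exact hinc
      have hsplitprod : ∀ (F : Sym2 V → ℚ_[p]), ∏ e ∈ G.edgeFinset, F e
          = F s(x, y) * ∏ e ∈ {e ∈ G.edgeFinset | x ∉ e}, F e := by
        intro F
        rw [← Finset.prod_filter_mul_prod_filter_not G.edgeFinset (fun e => x ∈ e) F,
          hfilter, Finset.prod_singleton]
      -- edges not containing x are edges of G'
      have himg : (G'.edgeFinset).image (Sym2.map (Subtype.val : ({x}ᶜ : Set V) → V))
          = {e ∈ G.edgeFinset | x ∉ e} := by
        ext e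
        simp only [Finset.mem_image, Finset.mem_filter, SimpleGraph.mem_edgeFinset]
        constructor
        · rintro ⟨e', he', rfl⟩
          induction e' using Sym2.ind with
          | _ a b =>
            have hab : G.Adj ↑a ↑b := by
              have := (SimpleGraph.mem_edgeSet G').mp he'
              exact this
            refine ⟨by simpa using hab, ?_⟩
            rw [Sym2.map_pair_eq, Sym2.mem_iff]
            push_neg
            exact ⟨fun hh => a.2 (by simp [hh.symm]), fun hh => b.2 (by simp [hh.symm])⟩
        · rintro ⟨hE, hnx⟩
          induction e using Sym2.ind with
          | _ a b =>
            rw [Sym2.mem_iff] at hnx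
            push_neg at hnx
            refine ⟨s(⟨a, by simp [Ne.symm hnx.1]⟩, ⟨b, by simp [Ne.symm hnx.2]⟩), ?_, ?_⟩
            · have hab : G.Adj a b := (SimpleGraph.mem_edgeSet G).mp hE
              simp only [SimpleGraph.mem_edgeSet]
              exact hab
            · rw [Sym2.map_pair_eq]
      -- the splitting equivalence
      let E : (Fin q × (({x}ᶜ : Set V) → Fin q)) ≃ (V → Fin q) :=
        { toFun := fun iψ v => if h : v = x then iψ.1 else iψ.2 ⟨v, h⟩
          invFun := fun φ => (φ x, fun v => φ ↑v)
          left_inv := by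
            rintro ⟨i, ψ⟩
            refine Prod.ext (by simp) ?_
            funext v
            simp only
            exact dif_neg (show ¬ (v : V) = x from Set.mem_compl_singleton_iff.mp v.2)
          right_inv := by
            intro φ
            funext v
            by_cases h : v = x
            · subst h; simp
            · simp [h] }
      have hEx : ∀ iψ, E iψ x = iψ.1 := fun iψ => dif_pos rfl
      have hEne : ∀ iψ (v : V) (h : v ≠ x), E iψ v = iψ.2 ⟨v, h⟩ := fun iψ v h => dif_neg h
      -- restricted function
      have hsym' : ∀ (a b : ({x}ᶜ : Set V)) i j, f ↑a ↑b i j = f ↑b ↑a j i :=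
        fun a b i j => hsym ↑a ↑b i j
      have hstoch' : ∀ (a b : ({x}ᶜ : Set V)), G'.Adj a b → ∀ i,
          ∑ j, f ↑a ↑b j i = 1 := by
        intro a b hab i
        exact hstoch ↑a ↑b (by exact hab) i
      have hih := ih (n - 1) (by omega) G' hcard' hT' (fun a b => f ↑a ↑b) hsym' hstoch'
      -- compute
      rw [← Equiv.sum_comp E, Fintype.sum_prod_type]
      have hterm : ∀ (i : Fin q) (ψ : ({x}ᶜ : Set V) → Fin q),
          (∏ e ∈ G.edgeFinset,
            Sym2.lift ⟨fun a b => f a b (E (i, ψ) a) (E (i, ψ) b),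
              fun a b => hsym a b _ _⟩ e)
          = f x y i (ψ ⟨y, by simp [hyx]⟩) *
            ∏ e ∈ G'.edgeFinset,
              Sym2.lift ⟨fun (a b : ({x}ᶜ : Set V)) => f ↑a ↑b (ψ a) (ψ b),
                fun a b => hsym' a b _ _⟩ e := by
        intro i ψ
        rw [hsplitprod]
        congr 1
        · rw [Sym2.lift_mk]
          simp only
          rw [hEx (i, ψ), hEne (i, ψ) y hyx]
        · rw [← himg, Finset.prod_image
            (fun e1 _ e2 _ h => Sym2.map.injective Subtype.val_injective h)]
          apply Finset.prod_congr rfl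
          intro e' _
          induction e' using Sym2.ind with
          | _ a b =>
            rw [Sym2.map_pair_eq, Sym2.lift_mk, Sym2.lift_mk]
            simp only
            rw [hEne (i, ψ) ↑a a.2, hEne (i, ψ) ↑b b.2]
      calc ∑ i : Fin q, ∑ ψ : ({x}ᶜ : Set V) → Fin q,
            ∏ e ∈ G.edgeFinset,
              Sym2.lift ⟨fun a b => f a b (E (i, ψ) a) (E (i, ψ) b),
                fun a b => hsym a b _ _⟩ e
          = ∑ ψ : ({x}ᶜ : Set V) → Fin q, ∑ i : Fin q,
              f x y i (ψ ⟨y, by simp [hyx]⟩) *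
                ∏ e ∈ G'.edgeFinset,
                  Sym2.lift ⟨fun (a b : ({x}ᶜ : Set V)) => f ↑a ↑b (ψ a) (ψ b),
                    fun a b => hsym' a b _ _⟩ e := by
            rw [Finset.sum_comm]
            exact Finset.sum_congr rfl fun ψ _ => Finset.sum_congr rfl fun i _ => hterm i ψ
        _ = ∑ ψ : ({x}ᶜ : Set V) → Fin q,
              ∏ e ∈ G'.edgeFinset,
                Sym2.lift ⟨fun (a b : ({x}ᶜ : Set V)) => f ↑a ↑b (ψ a) (ψ b),
                  fun a b => hsym' a b _ _⟩ e := by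
            apply Finset.sum_congr rfl
            intro ψ _
            rw [← Finset.sum_mul, hstoch x y hadj (ψ ⟨y, by simp [hyx]⟩), one_mul]
        _ = (q : ℚ_[p]) := hih



lemma prod_near_one {p : ℕ} [hp : Fact p.Prime] {ι : Type*} (t : Finset ι) (g : ι → ℚ_[p])
    (h : ∀ i ∈ t, ‖g i - 1‖ ≤ 1 / (p : ℝ)) : ‖(∏ i ∈ t, g i) - 1‖ ≤ 1 / (p : ℝ) := by
  have hp2 : (2 : ℝ) ≤ p := by exact_mod_cast hp.out.two_le
  have hp1 : (1 : ℝ) / p ≤ 1 := by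
    rw [div_le_one (by linarith)]; linarith
  classical
  induction t using Finset.induction_on with
  | empty => simp only [Finset.prod_empty, sub_self, norm_zero]; positivity
  | @insert a t ha ih =>
    rw [Finset.prod_insert ha]
    have hb := ih (fun i hi => h i (Finset.mem_insert_of_mem hi))
    have ha1 : ‖g a - 1‖ ≤ 1 / (p : ℝ) := h a (Finset.mem_insert_self _ _)
    have hga : ‖g a‖ ≤ 1 := by
      calc ‖g a‖ = ‖(g a - 1) + 1‖ := by ring_nf
        _ ≤ max ‖g a - 1‖ ‖(1 : ℚ_[p])‖ := Padic.nonarchimedean _ _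
        _ ≤ 1 := max_le (ha1.trans hp1) (by simp)
    calc ‖g a * ∏ i ∈ t, g i - 1‖ = ‖g a * ((∏ i ∈ t, g i) - 1) + (g a - 1)‖ := by ring_nf
      _ ≤ max ‖g a * ((∏ i ∈ t, g i) - 1)‖ ‖g a - 1‖ := Padic.nonarchimedean _ _
      _ ≤ 1 / (p : ℝ) := by
          refine max_le ?_ ha1
          rw [norm_mul]
          calc ‖g a‖ * ‖(∏ i ∈ t, g i) - 1‖ ≤ 1 * (1 / (p : ℝ)) :=
                mul_le_mul hga hb (norm_nonneg _) zero_le_one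
            _ = 1 / (p : ℝ) := one_mul _



/-- Part 1) of Theorem 6.1 (boundedness): on a finite tree with at least two vertices, with
column-stochastic symmetric edge matrices `Q` satisfying `|Q_{(x,y)}(i,j)|_p ≤ |q|_p`, and
boundary values `z_i(x)` at a nonempty set `∂Λ` of leaves with `|z_i(x) − 1|_p ≤ 1/p`, every
normalized weight
`(∏_{x ∈ ∂Λ} z_{ς(x)}(x)) (∏_{{x,y} ∈ E} Q_{(x,y)}(ς(x), ς(y))) / Z` has `p`-adic norm at
most `1`, where
`Z = Σ_{φ : W → {1,…,q}} (∏_{x ∈ ∂Λ} z_{φ(x)}(x)) ∏_{{x,y} ∈ E} Q_{(x,y)}(φ(x), φ(y))`. -/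
theorem padic_tree_markov_chain_bounded
    {V : Type*} [Fintype V] [DecidableEq V]
    (G : SimpleGraph V) [DecidableRel G.Adj] (hT : G.IsTree)
    (hcard : 2 ≤ Fintype.card V)
    (p : ℕ) [Fact p.Prime] (q : ℕ) (hq : 1 ≤ q)
    (Q : V → V → Fin q → Fin q → ℚ_[p])
    (hsym : ∀ x y : V, ∀ i j : Fin q, Q x y i j = Q y x j i)
    (hstoch : ∀ x y : V, G.Adj x y → ∀ i : Fin q, ∑ j : Fin q, Q x y j i = 1)
    (hQnorm : ∀ x y : V, G.Adj x y → ∀ i j : Fin q, ‖Q x y i j‖ ≤ ‖(q : ℚ_[p])‖)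
    (B : Finset V) (hB : B.Nonempty) (hleaf : ∀ x ∈ B, G.degree x = 1)
    (z : V → Fin q → ℚ_[p]) (hz : ∀ x ∈ B, ∀ i : Fin q, ‖z x i - 1‖ ≤ 1 / (p : ℝ)) :
    ∀ ς : V → Fin q,
      ‖((∏ x ∈ B, z x (ς x)) *
          ∏ e ∈ G.edgeFinset,
            Sym2.lift ⟨fun a b => Q a b (ς a) (ς b),
              fun a b => hsym a b (ς a) (ς b)⟩ e) /
        (∑ φ : V → Fin q,
          (∏ x ∈ B, z x (φ x)) *
            ∏ e ∈ G.edgeFinset,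
              Sym2.lift ⟨fun a b => Q a b (φ a) (φ b),
                fun a b => hsym a b (φ a) (φ b)⟩ e)‖ ≤ 1 := by
  intro ς
  have hp2 : (2 : ℝ) ≤ p := by exact_mod_cast (Fact.out : p.Prime).two_le
  have hppos : (0 : ℝ) < p := by linarith
  have hp1 : (1 : ℝ) / p ≤ 1 := by rw [div_le_one hppos]; linarith
  have hplt : (1 : ℝ) / p < 1 := by rw [div_lt_one hppos]; linarith
  have hq0 : (q : ℚ_[p]) ≠ 0 := by
    exact_mod_cast Nat.cast_ne_zero.mpr (by omega)
  have hqpos : 0 < ‖(q : ℚ_[p])‖ := norm_pos_iff.mpr hq0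
  have hqle : ‖(q : ℚ_[p])‖ ≤ 1 := by
    have := Padic.norm_int_le_one (p := p) (q : ℤ)
    simpa using this
  set m := G.edgeFinset.card with hm
  have hm1 : 1 ≤ m := by
    have := hT.card_edgeFinset
    omega
  -- bound on the edge factors
  have hedge : ∀ (φ : V → Fin q), ∀ e ∈ G.edgeFinset,
      ‖Sym2.lift ⟨fun a b => Q a b (φ a) (φ b), fun a b => hsym a b (φ a) (φ b)⟩ e‖
        ≤ ‖(q : ℚ_[p])‖ := by
    intro φ e he
    induction e using Sym2.ind with
    | _ a b =>
      rw [Sym2.lift_mk]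
      exact hQnorm a b ((SimpleGraph.mem_edgeSet G).mp (SimpleGraph.mem_edgeFinset.mp he)) _ _
  have hprodQ : ∀ (φ : V → Fin q),
      ‖∏ e ∈ G.edgeFinset,
        Sym2.lift ⟨fun a b => Q a b (φ a) (φ b), fun a b => hsym a b (φ a) (φ b)⟩ e‖
          ≤ ‖(q : ℚ_[p])‖ ^ m := by
    intro φ
    rw [norm_prod]
    calc ∏ e ∈ G.edgeFinset,
          ‖Sym2.lift ⟨fun a b => Q a b (φ a) (φ b), fun a b => hsym a b (φ a) (φ b)⟩ e‖
        ≤ ∏ _e ∈ G.edgeFinset, ‖(q : ℚ_[p])‖ :=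
          Finset.prod_le_prod (fun e _ => norm_nonneg _) (hedge φ)
      _ = ‖(q : ℚ_[p])‖ ^ m := by rw [Finset.prod_const]
  have hzle : ∀ (φ : V → Fin q), ‖∏ x ∈ B, z x (φ x)‖ ≤ 1 := by
    intro φ
    rw [norm_prod]
    apply Finset.prod_le_one (fun _ _ => norm_nonneg _)
    intro x hxB
    calc ‖z x (φ x)‖ = ‖(z x (φ x) - 1) + 1‖ := by ring_nf
      _ ≤ max ‖z x (φ x) - 1‖ ‖(1 : ℚ_[p])‖ := Padic.nonarchimedean _ _
      _ ≤ 1 := max_le ((hz x hxB _).trans hp1) (by simp)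
  have hW : ∀ (φ : V → Fin q),
      ‖(∏ x ∈ B, z x (φ x)) *
        ∏ e ∈ G.edgeFinset,
          Sym2.lift ⟨fun a b => Q a b (φ a) (φ b), fun a b => hsym a b (φ a) (φ b)⟩ e‖
      ≤ ‖(q : ℚ_[p])‖ ^ m := by
    intro φ
    rw [norm_mul]
    calc _ ≤ 1 * (‖(q : ℚ_[p])‖ ^ m) :=
          mul_le_mul (hzle φ) (hprodQ φ) (norm_nonneg _) zero_le_one
      _ = ‖(q : ℚ_[p])‖ ^ m := one_mul _
  -- the partition function for the tree without boundary weights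
  have hZ0 : (∑ φ : V → Fin q, ∏ e ∈ G.edgeFinset,
      Sym2.lift ⟨fun a b => Q a b (φ a) (φ b), fun a b => hsym a b (φ a) (φ b)⟩ e)
      = (q : ℚ_[p]) :=
    tree_sum q (Fintype.card V) G rfl hT Q hsym hstoch
  set Z : ℚ_[p] := ∑ φ : V → Fin q,
      (∏ x ∈ B, z x (φ x)) *
        ∏ e ∈ G.edgeFinset,
          Sym2.lift ⟨fun a b => Q a b (φ a) (φ b), fun a b => hsym a b (φ a) (φ b)⟩ e
    with hZ
  set Z₀ : ℚ_[p] := ∑ φ : V → Fin q, ∏ e ∈ G.edgeFinset,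
      Sym2.lift ⟨fun a b => Q a b (φ a) (φ b), fun a b => hsym a b (φ a) (φ b)⟩ e with hZ₀def
  have hZR : ‖Z - Z₀‖ ≤ (1 / (p : ℝ)) * ‖(q : ℚ_[p])‖ ^ m := by
    have hdiff : Z - Z₀ = ∑ φ : V → Fin q,
        ((∏ x ∈ B, z x (φ x)) - 1) *
          ∏ e ∈ G.edgeFinset,
            Sym2.lift ⟨fun a b => Q a b (φ a) (φ b), fun a b => hsym a b (φ a) (φ b)⟩ e := by
      rw [hZ, hZ₀def, ← Finset.sum_sub_distrib]
      exact Finset.sum_congr rfl fun φ _ => by ring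
    rw [hdiff]
    apply IsUltrametricDist.norm_sum_le_of_forall_le_of_nonneg (by positivity)
    intro φ _
    rw [norm_mul]
    exact mul_le_mul (prod_near_one B _ (fun x hx => hz x hx _)) (hprodQ φ)
      (norm_nonneg _) (by positivity)
  have hqmq : ‖(q : ℚ_[p])‖ ^ m ≤ ‖(q : ℚ_[p])‖ := by
    calc ‖(q : ℚ_[p])‖ ^ m ≤ ‖(q : ℚ_[p])‖ ^ 1 :=
          pow_le_pow_of_le_one (norm_nonneg _) hqle hm1
      _ = ‖(q : ℚ_[p])‖ := pow_one _
  have hZRlt : ‖Z - Z₀‖ < ‖(q : ℚ_[p])‖ := by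
    calc ‖Z - Z₀‖ ≤ (1 / (p : ℝ)) * ‖(q : ℚ_[p])‖ ^ m := hZR
      _ ≤ (1 / (p : ℝ)) * ‖(q : ℚ_[p])‖ :=
          mul_le_mul_of_nonneg_left hqmq (by positivity)
      _ < 1 * ‖(q : ℚ_[p])‖ := mul_lt_mul_of_pos_right hplt hqpos
      _ = ‖(q : ℚ_[p])‖ := one_mul _
  have hZge : ‖(q : ℚ_[p])‖ ≤ ‖Z‖ := by
    have hrw : (q : ℚ_[p]) = Z + (-(Z - Z₀)) := by rw [hZ₀def] at hZ0; rw [← hZ0]; ring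
    have hle : ‖(q : ℚ_[p])‖ ≤ max ‖Z‖ ‖-(Z - Z₀)‖ := by
      rw [hrw]; exact Padic.nonarchimedean _ _
    rw [norm_neg] at hle
    rcases max_cases ‖Z‖ ‖Z - Z₀‖ with ⟨heq, _⟩ | ⟨heq, _⟩
    · rwa [heq] at hle
    · rw [heq] at hle
      exact absurd (lt_of_le_of_lt hle hZRlt) (lt_irrefl _)
  rw [norm_div, div_le_one (lt_of_lt_of_le hqpos hZge)]
  calc _ ≤ ‖(q : ℚ_[p])‖ ^ m := hW ς
    _ ≤ ‖(q : ℚ_[p])‖ := hqmq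
    _ ≤ ‖Z‖ := hZge
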